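/- (Theorem 1, strong uniform consistency.) Fix an integer k ≥ 1 and CDFs F_[1],…,F_[k] of nonnegative random variables with F = (1/k) Σ_{r=1}^{k} F_[r] continuous, and fix 0 < τ < T < ∞ with F(τ) > 0 and F_[r](τ) > 0 for all r. Let {X_[r]j : r = 1,…,k; j ∈ ℕ} be mutually independent nonnegative random variables with X_[r]j having CDF F_[r] for every j. For m ∈ ℕ define K_RSS,m(t) = [Σ_{r=1}^{k} Σ_{j=1}^{m} (t − X_[r]j) 1{X_[r]j ≤ t}] / [Σ_{r=1}^{k} Σ_{j=1}^{m} 1{X_[r]j ≤ t}] (taken to be 0 when the denominator vanishes), and let K(t) = (∫₀ᵗ F(x)dx)/F(t). Then almost surely sup_{τ ≤ t ≤ T} |K_RSS,m(t) − K(t)| → 0 as m → ∞. -/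

import Mathlib

open MeasureTheory ProbabilityTheory Filter Finset

private lemma polya_uniform {f : ℕ → ℝ → ℝ} (hf : ∀ m, Monotone (f m)) {g : ℝ → ℝ}
    (hgc : Continuous g) (hgm : Monotone g) {c a b : ℝ} (hca : c < a)
    (hconv : ∀ q : ℚ, c < (q : ℝ) → Tendsto (fun m => f m (q : ℝ)) atTop (nhds (g (q : ℝ)))) :
    TendstoUniformlyOn f g atTop (Set.Icc a b) := by
  rw [Metric.tendstoUniformlyOn_iff]
  intro ε hε
  have hε4 : 0 < ε / 4 := by linarith
  have H : ∀ t : ℝ, c < t → ∃ u : ℚ, ∃ v : ℚ, c < (u : ℝ) ∧ (u : ℝ) < t ∧ t < (v : ℝ) ∧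
      |g u - g t| < ε / 4 ∧ |g v - g t| < ε / 4 := by
    intro t ht
    obtain ⟨δ, hδ, hδ'⟩ := Metric.continuous_iff.1 hgc t (ε / 4) hε4
    obtain ⟨u, hu1, hu2⟩ := exists_rat_btwn (show max (t - δ) c < t by
      rw [max_lt_iff]; exact ⟨by linarith, ht⟩)
    obtain ⟨v, hv1, hv2⟩ := exists_rat_btwn (show t < t + δ by linarith)
    have hum := le_max_left (t - δ) c
    have huc := le_max_right (t - δ) c
    refine ⟨u, v, lt_of_le_of_lt huc hu1, hu2, hv1, ?_, ?_⟩
    · have := hδ' (u : ℝ) (by rw [Real.dist_eq, abs_lt]; constructor <;> linarith)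
      rwa [Real.dist_eq] at this
    · have := hδ' (v : ℝ) (by rw [Real.dist_eq, abs_lt]; constructor <;> linarith)
      rwa [Real.dist_eq] at this
  choose! u v h1 h2 h3 h4 h5 using H
  obtain ⟨s, hsmem, hscover⟩ := isCompact_Icc.elim_nhds_subcover
    (fun t => Set.Ioo ((u t : ℝ)) ((v t : ℝ)))
    (fun x hx => Ioo_mem_nhds (h2 x (hca.trans_le hx.1)) (h3 x (hca.trans_le hx.1)))
  have hev : ∀ᶠ m in atTop, ∀ x ∈ s,
      |f m (u x) - g (u x)| < ε / 4 ∧ |f m (v x) - g (v x)| < ε / 4 := by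
    rw [eventually_all_finset]
    intro x hx
    have hcx : c < x := hca.trans_le (hsmem x hx).1
    have e1 := Metric.tendsto_nhds.1 (hconv (u x) (h1 x hcx)) (ε / 4) hε4
    have e2 := Metric.tendsto_nhds.1 (hconv (v x) (hcx.trans (h3 x hcx))) (ε / 4) hε4
    filter_upwards [e1, e2] with m hm1 hm2
    rw [Real.dist_eq] at hm1 hm2
    exact ⟨hm1, hm2⟩
  filter_upwards [hev] with m hm t ht
  obtain ⟨x, hxs, hx⟩ := Set.mem_iUnion₂.1 (hscover ht)
  have hcx : c < x := hca.trans_le (hsmem x hxs).1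
  obtain ⟨hm1, hm2⟩ := hm x hxs
  have h6 : f m t ≤ f m (v x) := hf m hx.2.le
  have h7 : f m (u x) ≤ f m t := hf m hx.1.le
  have h8 : g (u x) ≤ g t := hgm hx.1.le
  have h9 : g t ≤ g (v x) := hgm hx.2.le
  have hg1 := h4 x hcx
  have hg2 := h5 x hcx
  rw [abs_lt] at hm1 hm2 hg1 hg2
  rw [Real.dist_eq, abs_lt]
  constructor <;> linarith

private lemma integral_ite_le {Ω : Type*} [MeasurableSpace Ω] (μ : Measure Ω)
    [IsProbabilityMeasure μ] (X : Ω → ℝ) (hX : Measurable X) (t : ℝ) :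
    ∫ ω, (if X ω ≤ t then (1 : ℝ) else 0) ∂μ = (μ {ω | X ω ≤ t}).toReal := by
  have hset : MeasurableSet {ω | X ω ≤ t} := hX measurableSet_Iic
  rw [show (fun ω => if X ω ≤ t then (1 : ℝ) else 0)
      = Set.indicator {ω | X ω ≤ t} (fun _ => (1 : ℝ)) by
    ext ω; simp [Set.indicator_apply, Set.mem_setOf_eq]]
  rw [MeasureTheory.integral_indicator_const (1 : ℝ) hset]
  simp
  rfl

private lemma integral_max_eq {Ω : Type*} [MeasurableSpace Ω] (μ : Measure Ω)
    [IsProbabilityMeasure μ] (X : Ω → ℝ) (hX : Measurable X) (hXnn : ∀ ω, 0 ≤ X ω)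
    {t : ℝ} (ht : 0 ≤ t) :
    ∫ ω, max (t - X ω) 0 ∂μ = ∫ s in Set.Ioc (0 : ℝ) t, (μ {ω | X ω ≤ s}).toReal := by
  have step1 : ∀ ω, max (t - X ω) 0
      = ∫ s in Set.Ioc (0 : ℝ) t, (if X ω ≤ s then (1 : ℝ) else 0) := by
    intro ω
    set c := X ω with hc
    have hc0 : 0 ≤ c := hXnn ω
    have heq : (fun s : ℝ => if c ≤ s then (1 : ℝ) else 0)
        = Set.indicator (Set.Ici c) (fun _ => (1 : ℝ)) := by
      ext s; simp [Set.indicator_apply]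
    rw [heq, MeasureTheory.integral_indicator measurableSet_Ici,
      Measure.restrict_restrict measurableSet_Ici, setIntegral_const]
    have hsub2 : Set.Ici c ∩ Set.Ioc 0 t ⊆ Set.Icc c t := fun s hs => ⟨hs.1, hs.2.2⟩
    have hsub1 : Set.Ioc c t ⊆ Set.Ici c ∩ Set.Ioc 0 t := fun s hs =>
      ⟨hs.1.le, lt_of_le_of_lt hc0 hs.1, hs.2⟩
    have hvol : volume (Set.Ici c ∩ Set.Ioc 0 t) = ENNReal.ofReal (t - c) := by
      refine le_antisymm ?_ ?_
      · calc volume (Set.Ici c ∩ Set.Ioc 0 t) ≤ volume (Set.Icc c t) := measure_mono hsub2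
          _ = ENNReal.ofReal (t - c) := Real.volume_Icc
      · calc ENNReal.ofReal (t - c) = volume (Set.Ioc c t) := Real.volume_Ioc.symm
          _ ≤ volume (Set.Ici c ∩ Set.Ioc 0 t) := measure_mono hsub1
    rw [measureReal_def, hvol, smul_eq_mul, mul_one]
    rcases le_total c t with h | h
    · rw [ENNReal.toReal_ofReal (by linarith), max_eq_left (by linarith)]
    · rw [ENNReal.ofReal_eq_zero.2 (by linarith), ENNReal.toReal_zero,
        max_eq_right (by linarith)]
  have hEmeas : MeasurableSet {p : Ω × ℝ | X p.1 ≤ p.2} :=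
    measurableSet_le (hX.comp measurable_fst) measurable_snd
  have hfin : IsFiniteMeasure (volume.restrict (Set.Ioc (0 : ℝ) t)) :=
    ⟨by rw [Measure.restrict_apply_univ]; exact measure_Ioc_lt_top⟩
  have hint : Integrable (Function.uncurry fun ω s => if X ω ≤ s then (1 : ℝ) else 0)
      (μ.prod (volume.restrict (Set.Ioc (0 : ℝ) t))) := by
    have heq : (Function.uncurry fun ω s => if X ω ≤ s then (1 : ℝ) else 0)
        = Set.indicator {p : Ω × ℝ | X p.1 ≤ p.2} (fun _ => (1 : ℝ)) := by
      ext p; simp [Function.uncurry, Set.indicator_apply, Set.mem_setOf_eq]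
    rw [heq]
    exact (integrable_const (1 : ℝ)).indicator hEmeas
  calc ∫ ω, max (t - X ω) 0 ∂μ
      = ∫ ω, (∫ s in Set.Ioc (0 : ℝ) t, (if X ω ≤ s then (1 : ℝ) else 0)) ∂μ := by
        exact integral_congr_ae (ae_of_all _ step1)
    _ = ∫ s in Set.Ioc (0 : ℝ) t, ∫ ω, (if X ω ≤ s then (1 : ℝ) else 0) ∂μ :=
        integral_integral_swap hint
    _ = ∫ s in Set.Ioc (0 : ℝ) t, (μ {ω | X ω ≤ s}).toReal := by
        simp only [integral_ite_le μ X hX]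

/-- (Theorem 1, strong uniform consistency.)  Fix an integer `k ≥ 1` and CDFs
`F_[1], …, F_[k]` of nonnegative random variables with `F = (1/k) ∑_{r=1}^{k} F_[r]`
continuous, and fix `0 < τ < T < ∞` with `F τ > 0` and `F_[r] τ > 0` for all `r`.
Let `{X_[r]j : r = 1, …, k; j ∈ ℕ}` be mutually independent nonnegative random
variables with `X_[r]j` having CDF `F_[r]` for every `j`.  For `m ∈ ℕ` define
`K_RSS,m t = (∑_r ∑_{j<m} (t - X_[r]j) 1{X_[r]j ≤ t}) / (∑_r ∑_{j<m} 1{X_[r]j ≤ t})`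
(taken to be `0` when the denominator vanishes), and let `K t = (∫₀ᵗ F)/(F t)`.
Then almost surely `sup_{τ ≤ t ≤ T} |K_RSS,m t - K t| → 0` as `m → ∞`. -/
theorem K_RSS_strong_uniform_consistency
    {Ω : Type*} [MeasurableSpace Ω] (μ : Measure Ω) [IsProbabilityMeasure μ]
    (k : ℕ) (hk : 1 ≤ k)
    (X : Fin k → ℕ → Ω → ℝ) (hXmeas : ∀ r j, Measurable (X r j))
    (hXnn : ∀ r j ω, 0 ≤ X r j ω)
    (hindep : iIndepFun (fun p : Fin k × ℕ => X p.1 p.2) μ)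
    (Fr : Fin k → ℝ → ℝ) (hFr : ∀ r j x, Fr r x = (μ {ω | X r j ω ≤ x}).toReal)
    (F : ℝ → ℝ) (hF : ∀ x, F x = (1 / (k : ℝ)) * ∑ r, Fr r x)
    (hFcont : Continuous F)
    (τ T : ℝ) (hτ : 0 < τ) (hτT : τ < T)
    (hFτ : 0 < F τ) (hFrτ : ∀ r, 0 < Fr r τ)
    (KRSS : ℕ → ℝ → Ω → ℝ)
    (hKRSS : ∀ m t ω, KRSS m t ω =
      if 0 < ∑ r, ∑ j ∈ Finset.range m, (if X r j ω ≤ t then (1 : ℝ) else 0) then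
        (∑ r, ∑ j ∈ Finset.range m, (t - X r j ω) * (if X r j ω ≤ t then (1 : ℝ) else 0))
          / (∑ r, ∑ j ∈ Finset.range m, (if X r j ω ≤ t then (1 : ℝ) else 0))
      else 0)
    (K : ℝ → ℝ) (hK : ∀ t, K t = (∫ x in (0:ℝ)..t, F x) / F t) :
    ∀ᵐ ω ∂ μ,
      Tendsto (fun m => ⨆ t : Set.Icc τ T, |KRSS m t ω - K t|) atTop (nhds 0) := by
  -- basic facts about Fr and F
  have hFrmono : ∀ r, Monotone (Fr r) := by
    intro r x y hxy
    rw [hFr r 0 x, hFr r 0 y]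
    exact (ENNReal.toReal_le_toReal (measure_ne_top μ _) (measure_ne_top μ _)).2
      (measure_mono fun ω hω => le_trans hω hxy)
  have hFrnn : ∀ r x, 0 ≤ Fr r x := fun r x => by
    rw [hFr r 0 x]; exact ENNReal.toReal_nonneg
  have hFmono : Monotone F := by
    intro x y hxy
    rw [hF x, hF y]
    exact mul_le_mul_of_nonneg_left (Finset.sum_le_sum fun r _ => hFrmono r hxy)
      (by positivity)
  have hFnn : ∀ x, 0 ≤ F x := fun x => by
    rw [hF x]
    exact mul_nonneg (by positivity) (Finset.sum_nonneg fun r _ => hFrnn r x)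
  have hFrint : ∀ (r : Fin k) (a b : ℝ), IntervalIntegrable (Fr r) volume a b :=
    fun r a b => (hFrmono r).intervalIntegrable
  have hFint : ∀ a b : ℝ, IntervalIntegrable F volume a b :=
    fun a b => hFcont.intervalIntegrable a b
  set I : ℝ → ℝ := fun t => ∫ x in (0:ℝ)..t, F x with hIdef
  have hIcont : Continuous I := intervalIntegral.continuous_primitive (fun a b => hFint a b) 0
  have hImono : Monotone I := by
    intro x y hxy
    have h1 := intervalIntegral.integral_add_adjacent_intervals (hFint 0 x) (hFint x y)
    have h2 : 0 ≤ ∫ s in x..y, F s := intervalIntegral.integral_nonneg hxy fun u _ => hFnn u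
    simp only [hIdef]
    linarith [h1]
  have hI0 : I 0 = 0 := intervalIntegral.integral_same
  have hIq : ∀ t : ℝ, I t = (1 / (k : ℝ)) * ∑ r, ∫ x in (0:ℝ)..t, Fr r x := by
    intro t
    simp only [hIdef]
    rw [intervalIntegral.integral_congr (g := fun x => (1 / (k : ℝ)) * ∑ r, Fr r x)
      (fun x _ => hF x)]
    rw [intervalIntegral.integral_const_mul,
      intervalIntegral.integral_finset_sum (fun r _ => hFrint r 0 t)]
  -- identical distribution
  have hIdent : ∀ r j, IdentDistrib (X r j) (X r 0) μ μ := by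
    intro r j
    refine ⟨(hXmeas r j).aemeasurable, (hXmeas r 0).aemeasurable, ?_⟩
    have : IsProbabilityMeasure (μ.map (X r j)) := Measure.isProbabilityMeasure_map (hXmeas r j).aemeasurable
    have : IsProbabilityMeasure (μ.map (X r 0)) := Measure.isProbabilityMeasure_map (hXmeas r 0).aemeasurable
    refine MeasureTheory.Measure.ext_of_Iic _ _ fun x => ?_
    rw [Measure.map_apply (hXmeas r j) measurableSet_Iic,
      Measure.map_apply (hXmeas r 0) measurableSet_Iic]
    have h1 := (hFr r j x).symm.trans (hFr r 0 x)
    exact (ENNReal.toReal_eq_toReal_iff' (measure_ne_top μ _) (measure_ne_top μ _)).1 h1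
  -- SLLN for the denominator summands
  have hSD : ∀ (r : Fin k) (t : ℝ), ∀ᵐ ω ∂μ,
      Tendsto (fun m => (∑ j ∈ Finset.range m, (if X r j ω ≤ t then (1 : ℝ) else 0)) / m)
        atTop (nhds (Fr r t)) := by
    intro r t
    have hφ : Measurable (fun x : ℝ => if x ≤ t then (1 : ℝ) else 0) := by
      rw [show (fun x : ℝ => if x ≤ t then (1 : ℝ) else 0)
          = Set.indicator (Set.Iic t) (fun _ => (1 : ℝ)) by
        ext x; simp [Set.indicator_apply]]
      exact measurable_const.indicator measurableSet_Iic
    have hint : Integrable (fun ω => if X r 0 ω ≤ t then (1 : ℝ) else 0) μ := by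
      refine Integrable.mono' (integrable_const (1 : ℝ))
        ((hφ.comp (hXmeas r 0)).aestronglyMeasurable) ?_
      filter_upwards with ω
      rw [Real.norm_eq_abs]
      split_ifs <;> simp
    have hpind : Pairwise (Function.onFun (fun f g => IndepFun f g μ)
        (fun j ω => if X r j ω ≤ t then (1 : ℝ) else 0)) := by
      intro i j hij
      exact (hindep.indepFun (show ((⟨r, i⟩ : Fin k × ℕ)) ≠ ⟨r, j⟩ by
        simp [Prod.ext_iff, hij])).comp hφ hφ
    have hid : ∀ i, IdentDistrib (fun ω => if X r i ω ≤ t then (1 : ℝ) else 0)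
        (fun ω => if X r 0 ω ≤ t then (1 : ℝ) else 0) μ μ :=
      fun i => (hIdent r i).comp hφ
    have key := strong_law_ae_real _ hint hpind hid
    have hE : (μ[fun ω => if X r 0 ω ≤ t then (1 : ℝ) else 0]) = Fr r t := by
      rw [integral_ite_le μ (X r 0) (hXmeas r 0) t, hFr r 0 t]
    rwa [hE] at key
  -- SLLN for the numerator summands
  have hSN : ∀ (r : Fin k) (t : ℝ), 0 < t → ∀ᵐ ω ∂μ,
      Tendsto (fun m => (∑ j ∈ Finset.range m, max (t - X r j ω) 0) / m)
        atTop (nhds (∫ x in (0:ℝ)..t, Fr r x)) := by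
    intro r t ht
    have hψ : Measurable (fun x : ℝ => max (t - x) 0) :=
      (measurable_const.sub measurable_id).max measurable_const
    have hint : Integrable (fun ω => max (t - X r 0 ω) 0) μ := by
      refine Integrable.mono' (integrable_const (max t 0))
        ((hψ.comp (hXmeas r 0)).aestronglyMeasurable) ?_
      filter_upwards with ω
      rw [Real.norm_eq_abs, abs_of_nonneg (le_max_right _ _)]
      exact max_le_max (by linarith [hXnn r 0 ω]) le_rfl
    have hpind : Pairwise (Function.onFun (fun f g => IndepFun f g μ)
        (fun j ω => max (t - X r j ω) 0)) := by
      intro i j hij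
      exact (hindep.indepFun (show ((⟨r, i⟩ : Fin k × ℕ)) ≠ ⟨r, j⟩ by
        simp [Prod.ext_iff, hij])).comp hψ hψ
    have hid : ∀ i, IdentDistrib (fun ω => max (t - X r i ω) 0)
        (fun ω => max (t - X r 0 ω) 0) μ μ := fun i => (hIdent r i).comp hψ
    have key := strong_law_ae_real _ hint hpind hid
    have hE : (μ[fun ω => max (t - X r 0 ω) 0]) = ∫ x in (0:ℝ)..t, Fr r x := by
      rw [integral_max_eq μ (X r 0) (hXmeas r 0) (hXnn r 0) ht.le,
        intervalIntegral.integral_of_le ht.le]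
      simp only [← hFr r 0]
    rwa [hE] at key
  -- almost sure simultaneous convergence at positive rationals
  have hAE : ∀ᵐ ω ∂μ, ∀ q : ℚ, ∀ r : Fin k, 0 < ((q : ℝ)) →
      (Tendsto (fun m => (∑ j ∈ Finset.range m,
          (if X r j ω ≤ (q : ℝ) then (1 : ℝ) else 0)) / m) atTop (nhds (Fr r (q : ℝ))) ∧
       Tendsto (fun m => (∑ j ∈ Finset.range m, max ((q : ℝ) - X r j ω) 0) / m)
        atTop (nhds (∫ x in (0:ℝ)..(q : ℝ), Fr r x))) := by
    rw [ae_all_iff]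
    intro q
    rw [ae_all_iff]
    intro r
    rcases lt_or_ge 0 ((q : ℝ)) with hq | hq
    · filter_upwards [hSD r q, hSN r q hq] with ω h1 h2 _
      exact ⟨h1, h2⟩
    · exact ae_of_all _ fun ω h => absurd h (not_lt.2 hq)
  filter_upwards [hAE] with ω hω
  -- deterministic part
  have hk0 : (0 : ℝ) < k := by exact_mod_cast hk
  have halg : ∀ (S : Fin k → ℝ) (m : ℕ),
      (∑ r, S r) / ((k : ℝ) * m) = (1 / (k : ℝ)) * ∑ r, S r / m := by
    intro S m
    rw [Finset.mul_sum, Finset.sum_div]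
    refine Finset.sum_congr rfl fun r _ => ?_
    rw [one_div_mul_eq_div, div_div, mul_comm ((m:ℝ)) ((k:ℝ))]
  have hDconv : ∀ q : ℚ, 0 < (q : ℝ) → Tendsto
      (fun m => (∑ r, ∑ j ∈ Finset.range m,
        (if X r j ω ≤ (q : ℝ) then (1 : ℝ) else 0)) / ((k : ℝ) * m))
      atTop (nhds (F (q : ℝ))) := by
    intro q hq
    have h1 : Tendsto (fun m => ∑ r, (∑ j ∈ Finset.range m,
        (if X r j ω ≤ (q : ℝ) then (1 : ℝ) else 0)) / m) atTop
        (nhds (∑ r, Fr r (q : ℝ))) :=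
      tendsto_finset_sum _ fun r _ => (hω q r hq).1
    have h2 := h1.const_mul (1 / (k : ℝ))
    rw [hF]
    have heq : (fun m : ℕ => (∑ r, ∑ j ∈ Finset.range m,
        (if X r j ω ≤ (q : ℝ) then (1 : ℝ) else 0)) / ((k : ℝ) * m))
        = fun m : ℕ => (1 / (k : ℝ)) * ∑ r, (∑ j ∈ Finset.range m,
        (if X r j ω ≤ (q : ℝ) then (1 : ℝ) else 0)) / m :=
      funext fun m => halg _ m
    rw [heq]
    exact h2
  have hNconv : ∀ q : ℚ, 0 < (q : ℝ) → Tendsto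
      (fun m => (∑ r, ∑ j ∈ Finset.range m, max ((q : ℝ) - X r j ω) 0) / ((k : ℝ) * m))
      atTop (nhds (I (q : ℝ))) := by
    intro q hq
    have h1 : Tendsto (fun m => ∑ r, (∑ j ∈ Finset.range m,
        max ((q : ℝ) - X r j ω) 0) / m) atTop
        (nhds (∑ r, ∫ x in (0:ℝ)..(q : ℝ), Fr r x)) :=
      tendsto_finset_sum _ fun r _ => (hω q r hq).2
    have h2 := h1.const_mul (1 / (k : ℝ))
    rw [hIq]
    have heq : (fun m : ℕ => (∑ r, ∑ j ∈ Finset.range m,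
        max ((q : ℝ) - X r j ω) 0) / ((k : ℝ) * m))
        = fun m : ℕ => (1 / (k : ℝ)) * ∑ r, (∑ j ∈ Finset.range m,
        max ((q : ℝ) - X r j ω) 0) / m :=
      funext fun m => halg _ m
    rw [heq]
    exact h2
  -- monotonicity in t of the empirical functions
  have hDmono : ∀ m : ℕ, Monotone (fun t => (∑ r, ∑ j ∈ Finset.range m,
      (if X r j ω ≤ t then (1 : ℝ) else 0)) / ((k : ℝ) * m)) := by
    intro m s t hst
    have hsum : (∑ r, ∑ j ∈ Finset.range m, (if X r j ω ≤ s then (1 : ℝ) else 0))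
        ≤ ∑ r, ∑ j ∈ Finset.range m, (if X r j ω ≤ t then (1 : ℝ) else 0) := by
      refine Finset.sum_le_sum fun r _ => Finset.sum_le_sum fun j _ => ?_
      by_cases h : X r j ω ≤ s
      · rw [if_pos h, if_pos (h.trans hst)]
      · rw [if_neg h]
        split_ifs <;> norm_num
    exact div_le_div_of_nonneg_right hsum (by positivity) |>.trans le_rfl
  have hNmono : ∀ m : ℕ, Monotone (fun t => (∑ r, ∑ j ∈ Finset.range m,
      max (t - X r j ω) 0) / ((k : ℝ) * m)) := by
    intro m s t hst
    have hsum : (∑ r, ∑ j ∈ Finset.range m, max (s - X r j ω) 0)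
        ≤ ∑ r, ∑ j ∈ Finset.range m, max (t - X r j ω) 0 := by
      refine Finset.sum_le_sum fun r _ => Finset.sum_le_sum fun j _ => ?_
      exact max_le_max (by linarith) le_rfl
    exact div_le_div_of_nonneg_right hsum (by positivity) |>.trans le_rfl
  -- uniform convergence on [τ, T]
  have hDU : TendstoUniformlyOn (fun m t => (∑ r, ∑ j ∈ Finset.range m,
      (if X r j ω ≤ t then (1 : ℝ) else 0)) / ((k : ℝ) * m)) F atTop (Set.Icc τ T) :=
    polya_uniform hDmono hFcont hFmono hτ hDconv
  have hNU : TendstoUniformlyOn (fun m t => (∑ r, ∑ j ∈ Finset.range m,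
      max (t - X r j ω) 0) / ((k : ℝ) * m)) I atTop (Set.Icc τ T) :=
    polya_uniform hNmono hIcont hImono hτ hNconv
  -- epsilon argument
  rw [Metric.tendsto_nhds]
  intro ε hε
  have hFTpos : 0 < F T := lt_of_lt_of_le hFτ (hFmono hτT.le)
  have hITnn : 0 ≤ I T := hI0 ▸ hImono (by linarith)
  set η := min (F τ / 2) (ε * F τ * F τ / (8 * (F T + I T + 1))) with hηdef
  have hηpos : 0 < η := lt_min (by linarith) (by positivity)
  have hη1 : η ≤ F τ / 2 := min_le_left _ _
  have hη2 : η ≤ ε * F τ * F τ / (8 * (F T + I T + 1)) := min_le_right _ _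
  have e1 := Metric.tendstoUniformlyOn_iff.1 hDU η hηpos
  have e2 := Metric.tendstoUniformlyOn_iff.1 hNU η hηpos
  filter_upwards [e1, e2] with m hm1 hm2
  rw [Real.dist_eq, sub_zero]
  have hne : Nonempty (Set.Icc τ T) := Set.Nonempty.to_subtype (Set.nonempty_Icc.2 hτT.le)
  have hbound : ∀ t : Set.Icc τ T, |KRSS m (t : ℝ) ω - K (t : ℝ)| ≤ ε / 2 := by
    intro t
    set t' : ℝ := (t : ℝ) with ht'def
    have htm : t' ∈ Set.Icc τ T := t.2
    have ht1 : τ ≤ t' := htm.1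
    have ht2 : t' ≤ T := htm.2
    have hd := hm1 t' htm
    have hn := hm2 t' htm
    simp only [Real.dist_eq] at hd hn
    set Db : ℝ := (∑ r, ∑ j ∈ Finset.range m,
      (if X r j ω ≤ t' then (1 : ℝ) else 0)) / ((k : ℝ) * m) with hDbdef
    set Nb : ℝ := (∑ r, ∑ j ∈ Finset.range m, max (t' - X r j ω) 0) / ((k : ℝ) * m)
      with hNbdef
    have hFt : F τ ≤ F t' := hFmono ht1
    have hFtT : F t' ≤ F T := hFmono ht2
    have hFtpos : 0 < F t' := lt_of_lt_of_le hFτ hFt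
    have hItnn : 0 ≤ I t' := hI0 ▸ hImono (le_of_lt (lt_of_lt_of_le hτ ht1))
    have hItT : I t' ≤ I T := hImono ht2
    have habs_d := abs_lt.1 hd
    have hdb : F τ / 2 ≤ Db := by linarith
    have hDbpos : 0 < Db := by linarith
    have hkm : ((k : ℝ) * m) ≠ 0 := by
      intro h0
      have : Db = 0 := by rw [hDbdef, h0, div_zero]
      linarith
    have hkmpos : 0 < ((k : ℝ) * m) := lt_of_le_of_ne (by positivity) (Ne.symm hkm)
    have hDmpos : 0 < ∑ r, ∑ j ∈ Finset.range m,
        (if X r j ω ≤ t' then (1 : ℝ) else 0) := by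
      have hmul : (∑ r, ∑ j ∈ Finset.range m, (if X r j ω ≤ t' then (1 : ℝ) else 0))
          = Db * ((k : ℝ) * m) := by
        rw [hDbdef, div_mul_cancel₀ _ hkm]
      rw [hmul]
      exact mul_pos hDbpos hkmpos
    rw [hKRSS m t' ω, if_pos hDmpos, hK t']
    have hnum : (∑ r, ∑ j ∈ Finset.range m,
        (t' - X r j ω) * (if X r j ω ≤ t' then (1 : ℝ) else 0))
        = ∑ r, ∑ j ∈ Finset.range m, max (t' - X r j ω) 0 := by
      refine Finset.sum_congr rfl fun r _ => Finset.sum_congr rfl fun j _ => ?_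
      rcases le_or_gt (X r j ω) t' with h | h
      · rw [if_pos h, mul_one, max_eq_left (by linarith)]
      · rw [if_neg (not_le.2 h), mul_zero, max_eq_right (by linarith)]
    rw [hnum]
    have hratio : (∑ r, ∑ j ∈ Finset.range m, max (t' - X r j ω) 0)
        / (∑ r, ∑ j ∈ Finset.range m, (if X r j ω ≤ t' then (1 : ℝ) else 0))
        = Nb / Db := by
      rw [hNbdef, hDbdef, div_div_div_cancel_right₀ hkm]
    rw [hratio, show (∫ x in (0:ℝ)..t', F x) = I t' from rfl]
    have habs : |Nb * F t' - Db * I t'| ≤ η * F T + I T * η := by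
      have e : Nb * F t' - Db * I t' = (Nb - I t') * F t' + I t' * (F t' - Db) := by ring
      rw [e]
      refine (abs_add_le _ _).trans ?_
      rw [abs_mul, abs_mul]
      have h1 : |Nb - I t'| ≤ η := by rw [abs_sub_comm]; exact hn.le
      have h2 : |F t'| ≤ F T := by rw [abs_of_nonneg (hFnn t')]; exact hFtT
      have h3 : |I t'| ≤ I T := by rw [abs_of_nonneg hItnn]; exact hItT
      have h4 : |F t' - Db| ≤ η := hd.le
      exact add_le_add (mul_le_mul h1 h2 (abs_nonneg _) hηpos.le)
        (mul_le_mul h3 h4 (abs_nonneg _) hITnn)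
    have hdiv : |Nb / Db - I t' / F t'| ≤ (η * F T + I T * η) / (F τ / 2 * F τ) := by
      rw [div_sub_div _ _ (ne_of_gt hDbpos) (ne_of_gt hFtpos), abs_div,
        abs_of_pos (mul_pos hDbpos hFtpos)]
      exact div_le_div₀ (add_nonneg (by positivity) (mul_nonneg hITnn hηpos.le)) habs
        (by positivity) (mul_le_mul hdb hFt hFτ.le hDbpos.le)
    have hfinal : (η * F T + I T * η) / (F τ / 2 * F τ) ≤ ε / 2 := by
      rw [div_le_iff₀ (by positivity)]
      have e2 : η * F T + I T * η = η * (F T + I T) := by ring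
      rw [e2]
      have hB : (0:ℝ) < F T + I T + 1 := by linarith
      calc η * (F T + I T)
          ≤ (ε * F τ * F τ / (8 * (F T + I T + 1))) * (F T + I T + 1) :=
            mul_le_mul hη2 (by linarith) (by linarith) (by positivity)
        _ = ε * F τ * F τ / 8 := by field_simp
        _ ≤ ε / 2 * (F τ / 2 * F τ) := by nlinarith [mul_pos hFτ hFτ]
    exact hdiv.trans hfinal
  have hsup_le : (⨆ t : Set.Icc τ T, |KRSS m (t : ℝ) ω - K (t : ℝ)|) ≤ ε / 2 :=
    ciSup_le hbound
  have hbdd : BddAbove (Set.range fun t : Set.Icc τ T => |KRSS m (t : ℝ) ω - K (t : ℝ)|) := by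
    refine ⟨ε / 2, ?_⟩
    rintro x ⟨t, rfl⟩
    exact hbound t
  have hsup_nn : 0 ≤ ⨆ t : Set.Icc τ T, |KRSS m (t : ℝ) ω - K (t : ℝ)| :=
    le_trans (abs_nonneg _) (le_ciSup hbdd hne.some)
  rw [abs_of_nonneg hsup_nn]
  linarith
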